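/- arXiv:1312.4567 — 10 statements merged into one kernel-verified Lean document; each statement's English description precedes it below -/
import Mathlib

section
/- The product 𝔥₅ × ℝ of the 5-dimensional Heisenberg Lie algebra with the 1-dimensional abelian Lie algebra admits no symplectic structure; that is, every 2-cocycle on 𝔥₅ × ℝ is degenerate. -/
/-- The componentwise Lie ring structure on the product of two Lie rings. -/
instance prodLieRing (L M : Type*) [LieRing L] [LieRing M] : LieRing (L × M) where
  bracket x y := (⁅x.1, y.1⁆, ⁅x.2, y.2⁆)
  add_lie x y z := by
    show (⁅x.1 + y.1, z.1⁆, ⁅x.2 + y.2, z.2⁆) = _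
    simp [add_lie, Prod.ext_iff]
  lie_add x y z := by
    show (⁅x.1, y.1 + z.1⁆, ⁅x.2, y.2 + z.2⁆) = _
    simp [lie_add, Prod.ext_iff]
  lie_self x := by
    show (⁅x.1, x.1⁆, ⁅x.2, x.2⁆) = (0, 0)
    simp
  leibniz_lie x y z := by
    show (⁅x.1, ⁅y.1, z.1⁆⁆, ⁅x.2, ⁅y.2, z.2⁆⁆) = _
    simp only [Prod.ext_iff]
    constructor <;> exact leibniz_lie _ _ _

/-- The componentwise Lie algebra structure on the product of two Lie algebras. -/
instance prodLieAlgebra (R L M : Type*) [CommRing R] [LieRing L] [LieRing M]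
    [LieAlgebra R L] [LieAlgebra R M] : LieAlgebra R (L × M) :=
  { (inferInstance : Module R (L × M)) with
    lie_smul := fun t x y => by
      show (⁅x.1, (t • y).1⁆, ⁅x.2, (t • y).2⁆) = t • (⁅x.1, y.1⁆, ⁅x.2, y.2⁆)
      simp [Prod.smul_def, Prod.ext_iff] }

/-- A 2-cocycle on a real Lie algebra `L`: an alternating (hence skew-symmetric) bilinear
form `ω` such that `ω ⁅x,y⁆ z + ω ⁅y,z⁆ x + ω ⁅z,x⁆ y = 0` for all `x y z`. -/
def IsCocycle {L : Type*} [LieRing L] [LieAlgebra ℝ L]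
    (ω : L →ₗ[ℝ] L →ₗ[ℝ] ℝ) : Prop :=
  (∀ x, ω x x = 0) ∧ ∀ x y z, ω ⁅x, y⁆ z + ω ⁅y, z⁆ x + ω ⁅z, x⁆ y = 0

/-- A symplectic structure on a real Lie algebra: a nondegenerate 2-cocycle. -/
def IsSymplecticForm {L : Type*} [LieRing L] [LieAlgebra ℝ L]
    (ω : L →ₗ[ℝ] L →ₗ[ℝ] ℝ) : Prop :=
  IsCocycle ω ∧ ∀ x, (∀ y, ω x y = 0) → x = 0

/-- `b` is a basis of `L` exhibiting it as the 5-dimensional Heisenberg Lie algebra 𝔥₅: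
writing `X k = b (k-1)`, the only nonzero brackets are
`⁅X₂,X₃⁆ = X₁ = -⁅X₃,X₂⁆` and `⁅X₄,X₅⁆ = X₁ = -⁅X₅,X₄⁆`. -/
def IsH5Basis {L : Type*} [LieRing L] [LieAlgebra ℝ L] (b : Module.Basis (Fin 5) ℝ L) : Prop :=
  ∀ i j : Fin 5,
    ⁅b i, b j⁆ =
      if (i = 1 ∧ j = 2) ∨ (i = 3 ∧ j = 4) then b 0
      else if (i = 2 ∧ j = 1) ∨ (i = 4 ∧ j = 3) then -(b 0)
      else 0

attribute [local instance 100] LieRing.ofAssociativeRing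

/-- The product `𝔥₅ × ℝ` of the 5-dimensional Heisenberg Lie algebra with the
1-dimensional abelian Lie algebra admits no symplectic structure; that is, every
2-cocycle on `𝔥₅ × ℝ` is degenerate. -/
theorem heisenberg5_prod_real_no_symplectic
    {L : Type*} [LieRing L] [LieAlgebra ℝ L]
    (b : Module.Basis (Fin 5) ℝ L) (hb : IsH5Basis b) :
    (¬ ∃ ω : (L × ℝ) →ₗ[ℝ] (L × ℝ) →ₗ[ℝ] ℝ, IsSymplecticForm ω) ∧
      ∀ ω : (L × ℝ) →ₗ[ℝ] (L × ℝ) →ₗ[ℝ] ℝ, IsCocycle ω →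
        ∃ x : L × ℝ, x ≠ 0 ∧ ∀ y, ω x y = 0 := by
  -- bracket formula in the product
  have hbr : ∀ (a c : L) (s t : ℝ), ⁅((a, s) : L × ℝ), (c, t)⁆ = (⁅a, c⁆, 0) := by
    intro a c s t
    show ((⁅a, c⁆ : L), (⁅s, t⁆ : ℝ)) = (⁅a, c⁆, 0)
    simp [Ring.lie_def, mul_comm]
  have key : ∀ ω : (L × ℝ) →ₗ[ℝ] (L × ℝ) →ₗ[ℝ] ℝ, IsCocycle ω →
      ∃ x : L × ℝ, x ≠ 0 ∧ ∀ y, ω x y = 0 := by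
    intro ω hω
    obtain ⟨halt, hc⟩ := hω
    set x : L × ℝ := (b 0, 0) with hx
    have hxne : x ≠ 0 := fun h => b.ne_zero 0 (congrArg Prod.fst h)
    refine ⟨x, hxne, ?_⟩
    -- ω x vanishes on each basis vector of L (embedded) and on (0,1)
    have hzero : ∀ v : L × ℝ, ⁅v, v⁆ = 0 := fun v => lie_self v
    have hbj : ∀ j : Fin 5, ω x (b j, 0) = 0 := by
      intro j
      fin_cases j
      · -- j = 0 : alternating
        exact halt x
      · -- j = 1 : use triple (b 3, b 4, b 1)
        have := hc (b 3, 0) (b 4, 0) (b 1, 0)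
        rw [hbr, hbr, hbr, hb 3 4, hb 4 1, hb 1 3] at this
        simpa [hx, Prod.mk_zero_zero] using this
      · -- j = 2 : triple (b 3, b 4, b 2)
        have := hc (b 3, 0) (b 4, 0) (b 2, 0)
        rw [hbr, hbr, hbr, hb 3 4, hb 4 2, hb 2 3] at this
        simpa [hx, Prod.mk_zero_zero] using this
      · -- j = 3 : triple (b 1, b 2, b 3)
        have := hc (b 1, 0) (b 2, 0) (b 3, 0)
        rw [hbr, hbr, hbr, hb 1 2, hb 2 3, hb 3 1] at this
        simpa [hx, Prod.mk_zero_zero] using this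
      · -- j = 4 : triple (b 1, b 2, b 4)
        have := hc (b 1, 0) (b 2, 0) (b 4, 0)
        rw [hbr, hbr, hbr, hb 1 2, hb 2 4, hb 4 1] at this
        simpa [hx, Prod.mk_zero_zero] using this
    have hu : ω x ((0 : L), (1 : ℝ)) = 0 := by
      have := hc (b 1, 0) (b 2, 0) ((0 : L), (1 : ℝ))
      rw [hbr, hbr, hbr, hb 1 2] at this
      simpa [hx, Prod.mk_zero_zero] using this
    -- now conclude for all y
    intro y
    have hdecomp : y = (y.1, (0 : ℝ)) + y.2 • ((0 : L), (1 : ℝ)) := by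
      simp [Prod.ext_iff, Prod.smul_def]
    rw [hdecomp, map_add, map_smul, hu, smul_zero, add_zero]
    -- reduce to a linear functional on L vanishing on the basis
    have : (ω x).comp (LinearMap.inl ℝ L ℝ) = 0 := by
      apply b.ext
      intro j
      simpa using hbj j
    have h2 := LinearMap.congr_fun this y.1
    simpa using h2
  refine ⟨?_, key⟩
  rintro ⟨ω, hcoc, hnd⟩
  obtain ⟨x, hxne, hx0⟩ := key ω hcoc
  exact hxne (hnd x hx0)
end

section
/- For every n ≥ 2, the product 𝔥_{2n+1} × ℝ of the (2n+1)-dimensional Heisenberg Lie algebra with the 1-dimensional abelian Lie algebra admits no symplectic structure. -/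
/-- `b` is a Heisenberg basis of `L` (so `L ≅ 𝔥_{2n+1}`): writing `X k = b (k-1)`
(`b` is 0-indexed), the only nonzero brackets of basis vectors are
`⁅X_{2i}, X_{2i+1}⁆ = X₁ = -⁅X_{2i+1}, X_{2i}⁆` for `i = 1, …, n`. -/
def IsHeisenbergBasis {n : ℕ} {L : Type*} [LieRing L] [LieAlgebra ℝ L]
    (b : Module.Basis (Fin (2 * n + 1)) ℝ L) : Prop :=
  ∀ i j : Fin (2 * n + 1),
    ⁅b i, b j⁆ =
      if (i : ℕ) % 2 = 1 ∧ (j : ℕ) = (i : ℕ) + 1 then b 0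
      else if (j : ℕ) % 2 = 1 ∧ (i : ℕ) = (j : ℕ) + 1 then -(b 0)
      else 0

attribute [local instance] LieRing.ofAssociativeRing

/-- For every `n ≥ 2`, the product `𝔥_{2n+1} × ℝ` of the `(2n+1)`-dimensional Heisenberg
Lie algebra with the 1-dimensional abelian Lie algebra admits no symplectic structure. -/
theorem heisenberg_prod_real_no_symplectic
    {n : ℕ} (hn : 2 ≤ n)
    {L : Type*} [LieRing L] [LieAlgebra ℝ L]
    (b : Module.Basis (Fin (2 * n + 1)) ℝ L) (hb : IsHeisenbergBasis b) :
    ¬ ∃ ω : (L × ℝ) →ₗ[ℝ] (L × ℝ) →ₗ[ℝ] ℝ, IsSymplecticForm ω := by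
  rintro ⟨ω, ⟨⟨halt, hcoc⟩, hnd⟩⟩
  have h5 : 4 < 2 * n + 1 := by omega
  set Z : L × ℝ := (b 0, 0) with hZdef
  have hbr : ∀ x y : L, ⁅((x, 0) : L × ℝ), ((y, 0) : L × ℝ)⁆ = (⁅x, y⁆, 0) := by
    intro x y
    show (⁅x, y⁆, ⁅(0 : ℝ), (0 : ℝ)⁆) = (⁅x, y⁆, 0)
    simp
  have hbr2 : ∀ (x : L) (t : ℝ), ⁅((x, 0) : L × ℝ), ((0, t) : L × ℝ)⁆ = 0 := by
    intro x t
    show (⁅x, (0 : L)⁆, ⁅(0 : ℝ), t⁆) = (0 : L × ℝ)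
    simp [Prod.ext_iff]
  have hbr3 : ∀ (x : L) (t : ℝ), ⁅((0, t) : L × ℝ), ((x, 0) : L × ℝ)⁆ = 0 := by
    intro x t
    show (⁅(0 : L), x⁆, ⁅t, (0 : ℝ)⁆) = (0 : L × ℝ)
    simp [Prod.ext_iff]
  have hzero : ∀ j i : Fin (2 * n + 1),
      ¬((j : ℕ) % 2 = 1 ∧ (i : ℕ) = (j : ℕ) + 1) →
      ¬((i : ℕ) % 2 = 1 ∧ (j : ℕ) = (i : ℕ) + 1) → ⁅b j, b i⁆ = 0 := by
    intro j i h1 h2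
    rw [hb, if_neg h1, if_neg h2]
  have hone : ∀ j i : Fin (2 * n + 1),
      (j : ℕ) % 2 = 1 → (i : ℕ) = (j : ℕ) + 1 → ⁅b j, b i⁆ = b 0 := by
    intro j i h1 h2
    rw [hb, if_pos ⟨h1, h2⟩]
  have key : ∀ x y z : L × ℝ, ⁅x, y⁆ = Z → ⁅y, z⁆ = 0 → ⁅z, x⁆ = 0 → ω Z z = 0 := by
    intro x y z h1 h2 h3
    have h := hcoc x y z
    rw [h1, h2, h3] at h
    simpa using h
  have hZall : ∀ v, ω Z v = 0 := by
    have hωZ : ω Z = 0 := by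
      apply (b.prod (Module.Basis.singleton Unit ℝ)).ext
      rintro (i | u)
      · have hBi : (b.prod (Module.Basis.singleton Unit ℝ)) (Sum.inl i) = ((b i, 0) : L × ℝ) := by
          simp [Module.Basis.prod_apply]
        rw [hBi]
        simp only [LinearMap.zero_apply]
        rcases Nat.lt_or_ge (i : ℕ) 1 with hi | hi
        · have : i = 0 := by
            apply Fin.ext; simp only [Fin.val_zero]; omega
          rw [this]
          exact halt Z
        rcases Nat.lt_or_ge (i : ℕ) 3 with hi2 | hi2
        · refine key ((b ⟨3, by omega⟩, 0)) ((b ⟨4, by omega⟩, 0)) ((b i, 0)) ?_ ?_ ?_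
          · rw [hbr, hone] <;> simp
          · rw [hbr, hzero] <;> simp <;> omega
          · rw [hbr, hzero] <;> simp <;> omega
        · refine key ((b ⟨1, by omega⟩, 0)) ((b ⟨2, by omega⟩, 0)) ((b i, 0)) ?_ ?_ ?_
          · rw [hbr, hone] <;> simp
          · rw [hbr, hzero] <;> simp <;> omega
          · rw [hbr, hzero] <;> simp [show i ≠ 0 from fun h => by simp [h] at hi2] <;> omega
      · have hBu : (b.prod (Module.Basis.singleton Unit ℝ)) (Sum.inr u) = ((0, 1) : L × ℝ) := by
          simp [Module.Basis.prod_apply]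
        rw [hBu]
        simp only [LinearMap.zero_apply]
        refine key ((b ⟨1, by omega⟩, 0)) ((b ⟨2, by omega⟩, 0)) ((0, 1)) ?_ ?_ ?_
        · rw [hbr, hone] <;> simp
        · exact hbr2 _ _
        · exact hbr3 _ _
    intro v; rw [hωZ]; rfl
  have hZ0 : Z = 0 := hnd Z hZall
  have hb0 : b 0 = 0 := by
    have := congrArg Prod.fst hZ0
    simpa using this
  exact b.ne_zero 0 hb0
end

section
/- For every n ≥ 2, the central basis element X₁ of the (2n+1)-dimensional Heisenberg Lie algebra lies in the radical of every 2-cocycle: if ω is a 2-cocycle on 𝔥_{2n+1}, then ω(X₁, v) = 0 for every v ∈ 𝔥_{2n+1}. -/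
/-- For every `n ≥ 2`, the central basis element `X₁ = b 0` of the `(2n+1)`-dimensional
Heisenberg Lie algebra lies in the radical of every 2-cocycle. -/
theorem heisenberg_center_in_radical_of_cocycle
    {n : ℕ} (hn : 2 ≤ n)
    {L : Type*} [LieRing L] [LieAlgebra ℝ L]
    (b : Module.Basis (Fin (2 * n + 1)) ℝ L) (hb : IsHeisenbergBasis b)
    (ω : L →ₗ[ℝ] L →ₗ[ℝ] ℝ) (hω : IsCocycle ω) :
    ∀ v : L, ω (b 0) v = 0 := by
  obtain ⟨hskew, hcoc⟩ := hω
  have key : ∀ k : Fin (2 * n + 1), ω (b 0) (b k) = 0 := by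
    intro k
    have h1 : (1 : ℕ) < 2 * n + 1 := by omega
    have h2 : (2 : ℕ) < 2 * n + 1 := by omega
    have h3 : (3 : ℕ) < 2 * n + 1 := by omega
    have h4 : (4 : ℕ) < 2 * n + 1 := by omega
    by_cases hk : (k : ℕ) = 1 ∨ (k : ℕ) = 2
    · -- use the pair (b 3, b 4)
      have hb34 : ⁅b ⟨3, h3⟩, b ⟨4, h4⟩⁆ = b 0 := by
        rw [hb]; rw [if_pos]; exact ⟨by norm_num, by norm_num⟩
      have hb4k : ⁅b ⟨4, h4⟩, b k⁆ = 0 := by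
        rw [hb]; rw [if_neg, if_neg] <;> simp only [not_and] <;> omega
      have hbk3 : ⁅b k, b ⟨3, h3⟩⁆ = 0 := by
        rw [hb]; rw [if_neg, if_neg] <;> simp only [not_and] <;> omega
      have := hcoc (b ⟨3, h3⟩) (b ⟨4, h4⟩) (b k)
      rw [hb34, hb4k, hbk3] at this
      simpa using this
    · -- use the pair (b 1, b 2)
      have hb12 : ⁅b ⟨1, h1⟩, b ⟨2, h2⟩⁆ = b 0 := by
        rw [hb]; rw [if_pos]; exact ⟨by norm_num, by norm_num⟩
      have hb2k : ⁅b ⟨2, h2⟩, b k⁆ = 0 := by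
        rw [hb]; rw [if_neg, if_neg] <;> simp only [not_and] <;> omega
      have hbk1 : ⁅b k, b ⟨1, h1⟩⁆ = 0 := by
        rw [hb]; rw [if_neg, if_neg] <;> simp only [not_and] <;> omega
      have := hcoc (b ⟨1, h1⟩) (b ⟨2, h2⟩) (b k)
      rw [hb12, hb2k, hbk1] at this
      simpa using this
  have hzero : ω (b 0) = 0 := b.ext fun k => by simpa using key k
  intro v
  rw [hzero]
  rfl
end

section
/- Let 𝔤 be the 7-dimensional nilpotent real Lie algebra (13457C) with basis X₁, …, X₇ and nonzero brackets [X₁,X₂]=X₃, [X₁,X₃]=X₄, [X₁,X₄]=X₅, [X₁,X₆]=X₇, [X₂,X₅]=X₇, [X₃,X₄]=−X₇ (and those forced by antisymmetry). Then the product 𝔤 × ℝ with the 1-dimensional abelian Lie algebra admits no symplectic structure. -/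
/-- `b` is a basis of `L` exhibiting it as the 7-dimensional nilpotent Lie algebra (13457C)
from Gong's classification: writing `X k = b (k-1)`, the only nonzero brackets are
`⁅X₁,X₂⁆ = X₃`, `⁅X₁,X₃⁆ = X₄`, `⁅X₁,X₄⁆ = X₅`, `⁅X₁,X₆⁆ = X₇`, `⁅X₂,X₅⁆ = X₇`,
`⁅X₃,X₄⁆ = -X₇`, together with those forced by antisymmetry. -/
def Is13457CBasis {L : Type*} [LieRing L] [LieAlgebra ℝ L] (b : Module.Basis (Fin 7) ℝ L) : Prop :=
  ∀ i j : Fin 7,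
    ⁅b i, b j⁆ =
      if i = 0 ∧ j = 1 then b 2 else if i = 1 ∧ j = 0 then -(b 2)
      else if i = 0 ∧ j = 2 then b 3 else if i = 2 ∧ j = 0 then -(b 3)
      else if i = 0 ∧ j = 3 then b 4 else if i = 3 ∧ j = 0 then -(b 4)
      else if i = 0 ∧ j = 5 then b 6 else if i = 5 ∧ j = 0 then -(b 6)
      else if i = 1 ∧ j = 4 then b 6 else if i = 4 ∧ j = 1 then -(b 6)
      else if i = 2 ∧ j = 3 then -(b 6) else if i = 3 ∧ j = 2 then b 6
      else 0

attribute [local instance 100] LieRing.ofAssociativeRing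

/-- The product of the 7-dimensional nilpotent Lie algebra (13457C) with the
1-dimensional abelian Lie algebra `ℝ` admits no symplectic structure. -/
theorem lie13457C_prod_real_no_symplectic
    {L : Type*} [LieRing L] [LieAlgebra ℝ L]
    (b : Module.Basis (Fin 7) ℝ L) (hb : Is13457CBasis b) :
    ¬ ∃ Ω : (L × ℝ) →ₗ[ℝ] (L × ℝ) →ₗ[ℝ] ℝ, IsSymplecticForm Ω := by
  rintro ⟨Ω, ⟨⟨halt, hcoc⟩, hnd⟩⟩
  -- skew-symmetry
  have hsk : ∀ x y : L × ℝ, Ω x y = - Ω y x := by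
    intro x y
    have h := halt (x + y)
    simp only [map_add, LinearMap.add_apply, halt x, halt y] at h
    linarith
  -- the distinguished basis vectors of L × ℝ
  let E : Fin 7 → L × ℝ := fun i => (b i, 0)
  let E8 : L × ℝ := ((0 : L), (1 : ℝ))
  have hbE : ∀ i j : Fin 7, ⁅E i, E j⁆ = (⁅b i, b j⁆, (0 : ℝ)) := by
    intro i j
    show (⁅b i, b j⁆, ⁅(0 : ℝ), (0 : ℝ)⁆) = _
    rw [lie_zero]
  -- brackets among basis vectors
  have b01 : ⁅b 0, b 1⁆ = b 2 := by simpa using hb 0 1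
  have b02 : ⁅b 0, b 2⁆ = b 3 := by simpa using hb 0 2
  have b03 : ⁅b 0, b 3⁆ = b 4 := by simpa using hb 0 3
  have b05 : ⁅b 0, b 5⁆ = b 6 := by simpa using hb 0 5
  have b14 : ⁅b 1, b 4⁆ = b 6 := by simpa using hb 1 4
  have b23 : ⁅b 2, b 3⁆ = -(b 6) := by simpa using hb 2 3
  have b30 : ⁅b 3, b 0⁆ = -(b 4) := by simpa using hb 3 0
  have b40 : ⁅b 4, b 0⁆ = 0 := by simpa using hb 4 0
  have b12 : ⁅b 1, b 2⁆ = 0 := by simpa using hb 1 2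
  have b31 : ⁅b 3, b 1⁆ = 0 := by simpa using hb 3 1
  have b16 : ⁅b 1, b 6⁆ = 0 := by simpa using hb 1 6
  have b26 : ⁅b 2, b 6⁆ = 0 := by simpa using hb 2 6
  have b36 : ⁅b 3, b 6⁆ = 0 := by simpa using hb 3 6
  have b60 : ⁅b 6, b 0⁆ = 0 := by simpa using hb 6 0
  have b45 : ⁅b 4, b 5⁆ = 0 := by simpa using hb 4 5
  have b51 : ⁅b 5, b 1⁆ = 0 := by simpa using hb 5 1
  -- brackets in the product
  have h01 : ⁅E 0, E 1⁆ = E 2 := by rw [hbE, b01]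
  have h02 : ⁅E 0, E 2⁆ = E 3 := by rw [hbE, b02]
  have h03 : ⁅E 0, E 3⁆ = E 4 := by rw [hbE, b03]
  have h05 : ⁅E 0, E 5⁆ = E 6 := by rw [hbE, b05]
  have h14 : ⁅E 1, E 4⁆ = E 6 := by rw [hbE, b14]
  have h23 : ⁅E 2, E 3⁆ = -(E 6) := by
    rw [hbE, b23]
    show _ = -((b 6 : L), (0 : ℝ))
    rw [Prod.neg_mk, neg_zero]
  have h30 : ⁅E 3, E 0⁆ = -(E 4) := by
    rw [hbE, b30]
    show _ = -((b 4 : L), (0 : ℝ))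
    rw [Prod.neg_mk, neg_zero]
  have h40 : ⁅E 4, E 0⁆ = 0 := by rw [hbE, b40]; rfl
  have h12 : ⁅E 1, E 2⁆ = 0 := by rw [hbE, b12]; rfl
  have h31 : ⁅E 3, E 1⁆ = 0 := by rw [hbE, b31]; rfl
  have h16 : ⁅E 1, E 6⁆ = 0 := by rw [hbE, b16]; rfl
  have h26 : ⁅E 2, E 6⁆ = 0 := by rw [hbE, b26]; rfl
  have h36 : ⁅E 3, E 6⁆ = 0 := by rw [hbE, b36]; rfl
  have h60 : ⁅E 6, E 0⁆ = 0 := by rw [hbE, b60]; rfl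
  have h45 : ⁅E 4, E 5⁆ = 0 := by rw [hbE, b45]; rfl
  have h51 : ⁅E 5, E 1⁆ = 0 := by rw [hbE, b51]; rfl
  have h58 : ⁅E 5, E8⁆ = 0 := by
    show (⁅b 5, (0 : L)⁆, ⁅(0 : ℝ), (1 : ℝ)⁆) = 0
    rw [lie_zero, zero_lie]
    rfl
  have h80 : ⁅E8, E 0⁆ = 0 := by
    show (⁅(0 : L), b 0⁆, ⁅(1 : ℝ), (0 : ℝ)⁆) = 0
    rw [zero_lie, lie_zero]
    rfl
  -- cocycle instances
  have c1 := hcoc (E 0) (E 1) (E 4)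
  rw [h01, h14, h40] at c1
  simp only [map_zero, LinearMap.zero_apply, add_zero] at c1
  have c2 := hcoc (E 0) (E 2) (E 3)
  rw [h02, h23, h30] at c2
  simp only [map_neg, LinearMap.neg_apply, halt] at c2
  have c3 := hcoc (E 1) (E 2) (E 3)
  rw [h12, h23, h31] at c3
  simp only [map_zero, map_neg, LinearMap.zero_apply, LinearMap.neg_apply, zero_add,
    add_zero] at c3
  have c4 := hcoc (E 0) (E 1) (E 6)
  rw [h01, h16, h60] at c4
  simp only [map_zero, LinearMap.zero_apply, add_zero] at c4
  have c5 := hcoc (E 0) (E 2) (E 6)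
  rw [h02, h26, h60] at c5
  simp only [map_zero, LinearMap.zero_apply, add_zero] at c5
  have c6 := hcoc (E 0) (E 3) (E 6)
  rw [h03, h36, h60] at c6
  simp only [map_zero, LinearMap.zero_apply, add_zero] at c6
  have c7 := hcoc (E 1) (E 4) (E 5)
  rw [h14, h45, h51] at c7
  simp only [map_zero, LinearMap.zero_apply, add_zero] at c7
  have c8 := hcoc (E 0) (E 5) E8
  rw [h05, h58, h80] at c8
  simp only [map_zero, LinearMap.zero_apply, add_zero] at c8
  -- Ω (E 6) vanishes on all basis vectors
  have hv0 : Ω (E 6) (E 0) = 0 := by linarith [hsk (E 2) (E 4)]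
  have hv1 : Ω (E 6) (E 1) = 0 := by linarith
  have hv2 : Ω (E 6) (E 2) = 0 := by linarith [hsk (E 2) (E 6)]
  have hv3 : Ω (E 6) (E 3) = 0 := by linarith [hsk (E 3) (E 6)]
  have hv4 : Ω (E 6) (E 4) = 0 := by linarith [hsk (E 4) (E 6)]
  have hv5 : Ω (E 6) (E 5) = 0 := c7
  have hv6 : Ω (E 6) (E 6) = 0 := halt (E 6)
  have hv : ∀ j : Fin 7, Ω (E 6) (E j) = 0 := by
    intro j
    fin_cases j
    · exact hv0
    · exact hv1
    · exact hv2
    · exact hv3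
    · exact hv4
    · exact hv5
    · exact hv6
  -- hence Ω (E 6) vanishes identically
  have hL : ∀ l : L, Ω (E 6) (l, (0 : ℝ)) = 0 := by
    intro l
    have hcompzero : (Ω (E 6)).comp (LinearMap.inl ℝ L ℝ) = 0 := by
      apply b.ext
      intro i
      simpa using hv i
    simpa using LinearMap.congr_fun hcompzero l
  have hall : ∀ y : L × ℝ, Ω (E 6) y = 0 := by
    intro y
    have hy : y = (y.1, (0 : ℝ)) + y.2 • E8 := by
      simp [E8, Prod.ext_iff, Prod.smul_def]
    rw [hy, map_add, map_smul]
    rw [hL y.1, c8]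
    simp
  have hE6 : E 6 = 0 := hnd (E 6) hall
  have : b 6 = 0 := by
    have := congrArg Prod.fst hE6
    simpa using this
  exact b.ne_zero 6 this
end

section
/- Let 𝔤 be the 7-dimensional nilpotent real Lie algebra (13457C) with basis X₁, …, X₇ and nonzero brackets [X₁,X₂]=X₃, [X₁,X₃]=X₄, [X₁,X₄]=X₅, [X₁,X₆]=X₇, [X₂,X₅]=X₇, [X₃,X₄]=−X₇. Then X₇ lies in the radical of every 2-cocycle on 𝔤: if ω is a 2-cocycle on 𝔤, then ω(X₇, v) = 0 for every v ∈ 𝔤. -/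
/-- In the 7-dimensional nilpotent Lie algebra (13457C), the basis element `X₇ = b 6`
lies in the radical of every 2-cocycle. -/
theorem lie13457C_X7_in_radical_of_cocycle
    {L : Type*} [LieRing L] [LieAlgebra ℝ L]
    (b : Module.Basis (Fin 7) ℝ L) (hb : Is13457CBasis b)
    (ω : L →ₗ[ℝ] L →ₗ[ℝ] ℝ) (hω : IsCocycle ω) :
    ∀ v : L, ω (b 6) v = 0 := by
  have skew : ∀ x y : L, ω x y = - ω y x := by
    intro x y
    have h := hω.1 (x + y)
    simp only [map_add, LinearMap.add_apply, hω.1 x, hω.1 y] at h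
    linarith
  have C := hω.2
  have br : ∀ i j : Fin 7, ⁅b i, b j⁆ =
      if i = 0 ∧ j = 1 then b 2 else if i = 1 ∧ j = 0 then -(b 2)
      else if i = 0 ∧ j = 2 then b 3 else if i = 2 ∧ j = 0 then -(b 3)
      else if i = 0 ∧ j = 3 then b 4 else if i = 3 ∧ j = 0 then -(b 4)
      else if i = 0 ∧ j = 5 then b 6 else if i = 5 ∧ j = 0 then -(b 6)
      else if i = 1 ∧ j = 4 then b 6 else if i = 4 ∧ j = 1 then -(b 6)
      else if i = 2 ∧ j = 3 then -(b 6) else if i = 3 ∧ j = 2 then b 6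
      else 0 := hb
  have k1 : ω (b 6) (b 1) = 0 := by
    have h := C (b 2) (b 3) (b 1)
    rw [br, br, br] at h
    simp at h
    linarith
  have k2 : ω (b 6) (b 2) = 0 := by
    have h := C (b 1) (b 4) (b 2)
    rw [br, br, br] at h
    simp at h
    linarith
  have k3 : ω (b 6) (b 3) = 0 := by
    have h := C (b 1) (b 4) (b 3)
    rw [br, br, br] at h
    simp at h
    linarith
  have k4 : ω (b 6) (b 4) = 0 := by
    have h := C (b 2) (b 3) (b 4)
    rw [br, br, br] at h
    simp at h
    linarith
  have k5 : ω (b 6) (b 5) = 0 := by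
    have h := C (b 1) (b 4) (b 5)
    rw [br, br, br] at h
    simp at h
    linarith
  have k6 : ω (b 6) (b 6) = 0 := hω.1 (b 6)
  have k0 : ω (b 6) (b 0) = 0 := by
    have h1 := C (b 1) (b 4) (b 0)
    have h2 := C (b 2) (b 3) (b 0)
    rw [br, br, br] at h1
    rw [br, br, br] at h2
    simp at h1 h2
    have s := skew (b 4) (b 2)
    have a3 := hω.1 (b 3)
    linarith
  intro v
  have hzero : ω (b 6) = 0 := b.ext fun j => by
    fin_cases j
    · exact k0
    · exact k1
    · exact k2
    · exact k3
    · exact k4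
    · exact k5
    · exact k6
  rw [hzero]
  rfl
end

section
/- Let 𝔤 and 𝔥 be finite-dimensional real Lie algebras. Let ω_𝔤 be a 2-cocycle on 𝔤 and α : 𝔤 → ℝ a linear functional vanishing on [𝔤,𝔤], such that the radical {x ∈ 𝔤 : ω_𝔤(x,·) = 0} of ω_𝔤 is one-dimensional, spanned by an element z with α(z) ≠ 0; let ω_𝔥, β : 𝔥 → ℝ, and w ∈ 𝔥 satisfy the analogous conditions for 𝔥. Then the bilinear form Ω on 𝔤 × 𝔥 defined by Ω((x,y),(x',y')) = ω_𝔤(x,x') + ω_𝔥(y,y') + α(x)β(y') − α(x')β(y) is a symplectic structure on the product Lie algebra 𝔤 × 𝔥. -/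
/-- If `ωL` is a 2-cocycle on `L` whose radical is one-dimensional, spanned by `z`, and
`α` is a linear functional vanishing on `⁅L, L⁆` with `α z ≠ 0` (and similarly
`ωM`, `β`, `w` for `M`), then
`Ω ((x,y), (x',y')) = ωL x x' + ωM y y' + α x * β y' - α x' * β y`
is a symplectic structure on the product Lie algebra `L × M`. -/
theorem symplectic_on_prod_of_cocycles_with_line_radical
    {L M : Type*} [LieRing L] [LieAlgebra ℝ L] [FiniteDimensional ℝ L]
    [LieRing M] [LieAlgebra ℝ M] [FiniteDimensional ℝ M]
    (ωL : L →ₗ[ℝ] L →ₗ[ℝ] ℝ) (hωL : IsCocycle ωL)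
    (α : L →ₗ[ℝ] ℝ) (hα : ∀ x y : L, α ⁅x, y⁆ = 0)
    (z : L) (hαz : α z ≠ 0)
    (hradL : {x : L | ∀ y, ωL x y = 0} = (Submodule.span ℝ {z} : Submodule ℝ L))
    (ωM : M →ₗ[ℝ] M →ₗ[ℝ] ℝ) (hωM : IsCocycle ωM)
    (β : M →ₗ[ℝ] ℝ) (hβ : ∀ x y : M, β ⁅x, y⁆ = 0)
    (w : M) (hβw : β w ≠ 0)
    (hradM : {x : M | ∀ y, ωM x y = 0} = (Submodule.span ℝ {w} : Submodule ℝ M))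
    (Ω : (L × M) →ₗ[ℝ] (L × M) →ₗ[ℝ] ℝ)
    (hΩ : ∀ (x x' : L) (y y' : M),
      Ω (x, y) (x', y') = ωL x x' + ωM y y' + α x * β y' - α x' * β y) :
    IsSymplecticForm Ω := by

  have skewL : ∀ a b : L, ωL a b = - ωL b a := by
    intro a b
    have h := hωL.1 (a + b)
    have ha := hωL.1 a
    have hb := hωL.1 b
    simp only [map_add, LinearMap.add_apply] at h
    linarith
  have skewM : ∀ a b : M, ωM a b = - ωM b a := by
    intro a b
    have h := hωM.1 (a + b)
    have ha := hωM.1 a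
    have hb := hωM.1 b
    simp only [map_add, LinearMap.add_apply] at h
    linarith
  have hzrad : ∀ y, ωL z y = 0 := by
    have hz : z ∈ {x : L | ∀ y, ωL x y = 0} := by
      rw [hradL]
      exact Submodule.mem_span_singleton_self z
    exact hz
  have hwrad : ∀ y, ωM w y = 0 := by
    have hw : w ∈ {x : M | ∀ y, ωM x y = 0} := by
      rw [hradM]
      exact Submodule.mem_span_singleton_self w
    exact hw
  refine ⟨⟨fun p => ?_, fun p q r => ?_⟩, fun p hp => ?_⟩
  · obtain ⟨x, y⟩ := p
    rw [hΩ]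
    rw [hωL.1, hωM.1]
    ring
  · obtain ⟨x, y⟩ := p
    obtain ⟨x', y'⟩ := q
    obtain ⟨x'', y''⟩ := r
    have hb1 : (⁅(x, y), (x', y')⁆ : L × M) = (⁅x, x'⁆, ⁅y, y'⁆) := rfl
    have hb2 : (⁅(x', y'), (x'', y'')⁆ : L × M) = (⁅x', x''⁆, ⁅y', y''⁆) := rfl
    have hb3 : (⁅(x'', y''), (x, y)⁆ : L × M) = (⁅x'', x⁆, ⁅y'', y⁆) := rfl
    rw [hb1, hb2, hb3, hΩ, hΩ, hΩ]
    have c1 := hωL.2 x x' x''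
    have c2 := hωM.2 y y' y''
    rw [hα, hα, hα, hβ, hβ, hβ]
    ring_nf
    ring_nf at c1 c2
    linarith
  · obtain ⟨x, y⟩ := p
    have h1 : ∀ x' : L, ωL x x' - α x' * β y = 0 := by
      intro x'
      have := hp (x', 0)
      rw [hΩ] at this
      simpa using this
    have h2 : ∀ y' : M, ωM y y' + α x * β y' = 0 := by
      intro y'
      have := hp (0, y')
      rw [hΩ] at this
      simpa using this
    have hβy : β y = 0 := by
      have := h1 z
      rw [skewL, hzrad] at this
      simp only [neg_zero, zero_sub, neg_eq_zero] at this
      exact (mul_eq_zero.mp this).resolve_left hαz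
    have hαx : α x = 0 := by
      have := h2 w
      rw [skewM, hwrad] at this
      simp only [neg_zero, zero_add] at this
      exact (mul_eq_zero.mp this).resolve_right hβw
    have hxrad : x ∈ {a : L | ∀ b, ωL a b = 0} := by
      intro b
      have := h1 b
      rw [hβy] at this
      linarith
    have hyrad : y ∈ {a : M | ∀ b, ωM a b = 0} := by
      intro b
      have := h2 b
      rw [hαx] at this
      linarith
    rw [hradL] at hxrad
    rw [hradM] at hyrad
    obtain ⟨c, hc⟩ := Submodule.mem_span_singleton.mp hxrad
    obtain ⟨d, hd⟩ := Submodule.mem_span_singleton.mp hyrad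
    have hc0 : c = 0 := by
      have : α x = c * α z := by rw [← hc]; simp
      rw [hαx] at this
      rcases mul_eq_zero.mp this.symm with h | h
      · exact h
      · exact absurd h hαz
    have hd0 : d = 0 := by
      have : β y = d * β w := by rw [← hd]; simp
      rw [hβy] at this
      rcases mul_eq_zero.mp this.symm with h | h
      · exact h
      · exact absurd h hβw
    have hx0 : x = 0 := by rw [← hc, hc0, zero_smul]
    have hy0 : y = 0 := by rw [← hd, hd0, zero_smul]
    rw [hx0, hy0]
    rfl
end

section
/- Let 𝔤 and 𝔥 be finite-dimensional real Lie algebras of odd dimension. If both product Lie algebras 𝔤 × ℝ and 𝔥 × ℝ admit symplectic structures, then the product Lie algebra 𝔤 × 𝔥 admits a symplectic structure. -/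
attribute [instance 100] LieRing.ofAssociativeRing

lemma exists_reduction {L : Type*} [LieRing L] [LieAlgebra ℝ L] [FiniteDimensional ℝ L]
    (h : ∃ ω : (L × ℝ) →ₗ[ℝ] (L × ℝ) →ₗ[ℝ] ℝ, IsSymplecticForm ω) :
    ∃ (ω : L →ₗ[ℝ] L →ₗ[ℝ] ℝ) (α : L →ₗ[ℝ] ℝ) (u : L) (s : ℝ),
      (∀ x, ω x x = 0) ∧
      (∀ x y z : L, ω ⁅x, y⁆ z + ω ⁅y, z⁆ x + ω ⁅z, x⁆ y = 0) ∧
      (∀ x y : L, α ⁅x, y⁆ = 0) ∧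
      α u = 1 ∧
      (∀ x c, (∀ y, ω x y = c * α y) → x = α x • u ∧ c = s * α x) := by
  obtain ⟨ω₁, ⟨⟨halt, hcoc⟩, hnd⟩⟩ := h
  -- skew symmetry
  have hskew : ∀ p q : L × ℝ, ω₁ p q = - ω₁ q p := by
    intro p q
    have h1 := halt (p + q)
    simp only [map_add, LinearMap.add_apply, halt] at h1
    linarith
  set ω : L →ₗ[ℝ] L →ₗ[ℝ] ℝ :=
    ω₁.compl₁₂ (LinearMap.inl ℝ L ℝ) (LinearMap.inl ℝ L ℝ) with hωdef
  set α : L →ₗ[ℝ] ℝ := (ω₁.flip ((0 : L), (1 : ℝ))).comp (LinearMap.inl ℝ L ℝ) with hαdef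
  have hωapp : ∀ x y : L, ω x y = ω₁ (x, 0) (y, 0) := by
    intro x y; simp [hωdef, LinearMap.compl₁₂_apply]
  have hαapp : ∀ x : L, α x = ω₁ (x, 0) ((0 : L), (1 : ℝ)) := by
    intro x; simp [hαdef]
  have hform : ∀ (x : L) (c : ℝ) (y : L) (t : ℝ),
      ω₁ (x, c) (y, t) = ω x y + t * α x - c * α y := by
    intro x c y t
    have e1 : ((x, c) : L × ℝ) = (x, 0) + c • ((0 : L), (1 : ℝ)) := by
      simp [Prod.ext_iff]
    have e2 : ((y, t) : L × ℝ) = (y, 0) + t • ((0 : L), (1 : ℝ)) := by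
      simp [Prod.ext_iff]
    rw [e1, e2]
    simp only [map_add, map_smul, LinearMap.add_apply, LinearMap.smul_apply, smul_eq_mul]
    have h01 : ω₁ ((0 : L), (1 : ℝ)) ((0 : L), (1 : ℝ)) = 0 := halt _
    have h0y : ω₁ ((0 : L), (1 : ℝ)) (y, 0) = - α y := by rw [hαapp, hskew]
    rw [h01, h0y, hωapp, hαapp x]
    ring
  -- radical statement
  have rad0 : ∀ (x : L) (c : ℝ), (∀ y, ω x y = c * α y) → α x = 0 → x = 0 ∧ c = 0 := by
    intro x c hx hax
    have : ((x, c) : L × ℝ) = 0 := by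
      apply hnd
      rintro ⟨y, t⟩
      rw [hform, hx y, hax]
      ring
    exact ⟨congrArg Prod.fst this, congrArg Prod.snd this⟩
  -- find a primitive vector
  have hni : ¬ Function.Injective (ω₁.compl₂ (LinearMap.inl ℝ L ℝ)) := by
    intro hinj
    have hle := LinearMap.finrank_le_finrank_of_injective hinj
    rw [Module.finrank_prod, Module.finrank_self] at hle
    have : Module.finrank ℝ (L →ₗ[ℝ] ℝ) = Module.finrank ℝ L := by
      rw [Module.finrank_linearMap, Module.finrank_self, mul_one]
    omega
  rw [Function.not_injective_iff] at hni
  obtain ⟨a, b, hab, hne⟩ := hni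
  set e := a - b with he
  have he0 : e ≠ 0 := sub_ne_zero_of_ne hne
  have heker : ∀ y : L, ω₁ e (y, 0) = 0 := by
    intro y
    have : (ω₁.compl₂ (LinearMap.inl ℝ L ℝ)) e = 0 := by
      rw [he, map_sub, hab, sub_self]
    have := congrArg (fun f => f y) this
    simpa [LinearMap.compl₂_apply] using this
  have hkey : ∀ y : L, ω e.1 y = e.2 * α y := by
    intro y
    have h := heker y
    have : ω₁ (e.1, e.2) (y, 0) = 0 := by simpa using h
    rw [hform] at this
    linarith
  have haw : α e.1 ≠ 0 := by
    intro h0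
    obtain ⟨h1, h2⟩ := rad0 e.1 e.2 hkey h0
    exact he0 (Prod.ext h1 h2)
  set aa := α e.1 with haa
  refine ⟨ω, α, aa⁻¹ • e.1, e.2 / aa, ?_, ?_, ?_, ?_, ?_⟩
  · intro x; rw [hωapp]; exact halt _
  · intro x y z
    have h := hcoc (x, 0) (y, 0) (z, 0)
    have hb : ∀ p q : L, ⁅((p, 0) : L × ℝ), ((q, 0) : L × ℝ)⁆ = (⁅p, q⁆, 0) := by
      intro p q
      show ((⁅p, q⁆, ⁅(0:ℝ), (0:ℝ)⁆) : L × ℝ) = _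
      simp
    rw [hb, hb, hb] at h
    simpa only [hωapp] using h
  · intro x y
    have h := hcoc (x, 0) (y, 0) ((0 : L), (1 : ℝ))
    have hb : ⁅((x, 0) : L × ℝ), ((y, 0) : L × ℝ)⁆ = ((⁅x, y⁆ : L), (0:ℝ)) := by
      show ((⁅x, y⁆, ⁅(0:ℝ), (0:ℝ)⁆) : L × ℝ) = _
      simp
    have hb2 : ⁅((y, 0) : L × ℝ), (((0 : L), (1 : ℝ)) : L × ℝ)⁆ = (0 : L × ℝ) := by
      show ((⁅y, (0:L)⁆, ⁅(0:ℝ), (1:ℝ)⁆) : L × ℝ) = _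
      simp [Prod.ext_iff]
    have hb3 : ⁅(((0 : L), (1 : ℝ)) : L × ℝ), ((x, 0) : L × ℝ)⁆ = (0 : L × ℝ) := by
      show ((⁅(0:L), x⁆, ⁅(1:ℝ), (0:ℝ)⁆) : L × ℝ) = _
      simp [Prod.ext_iff]
    rw [hb, hb2, hb3] at h
    simp only [map_zero, LinearMap.zero_apply, add_zero] at h
    have h2 : ω₁ ((⁅x, y⁆ : L), (0:ℝ)) ((0 : L), (1 : ℝ)) = 0 := by linarith
    rw [hαapp]
    exact h2
  · rw [map_smul, smul_eq_mul, ← haa]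
    exact inv_mul_cancel₀ haw
  · intro x c hx
    have key2 : ∀ y, ω (aa⁻¹ • e.1) y = (e.2 / aa) * α y := by
      intro y
      rw [map_smul, LinearMap.smul_apply, smul_eq_mul, hkey]
      field_simp
    -- apply rad0 to x - α x • u
    have hx' : ∀ y, ω (x - α x • (aa⁻¹ • e.1)) y = (c - α x * (e.2 / aa)) * α y := by
      intro y
      rw [map_sub, LinearMap.sub_apply, hx, map_smul, LinearMap.smul_apply,
        smul_eq_mul, key2]
      ring
    have hax' : α (x - α x • (aa⁻¹ • e.1)) = 0 := by
      rw [map_sub, map_smul, map_smul, smul_eq_mul, smul_eq_mul, ← haa]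
      field_simp
      ring
    obtain ⟨h1, h2⟩ := rad0 _ _ hx' hax'
    constructor
    · exact sub_eq_zero.mp h1
    · have : c = α x * (e.2 / aa) := by linarith
      rw [this]; ring

/-- If `L` and `M` are odd-dimensional real Lie algebras such that both `L × ℝ` and
`M × ℝ` admit symplectic structures, then `L × M` admits a symplectic structure. -/
theorem prod_symplectic_of_both_prod_real_symplectic
    {L M : Type*} [LieRing L] [LieAlgebra ℝ L] [FiniteDimensional ℝ L]
    [LieRing M] [LieAlgebra ℝ M] [FiniteDimensional ℝ M]
    (hL : Odd (Module.finrank ℝ L)) (hM : Odd (Module.finrank ℝ M))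
    (h1 : ∃ ω : (L × ℝ) →ₗ[ℝ] (L × ℝ) →ₗ[ℝ] ℝ, IsSymplecticForm ω)
    (h2 : ∃ ω : (M × ℝ) →ₗ[ℝ] (M × ℝ) →ₗ[ℝ] ℝ, IsSymplecticForm ω) :
    ∃ Ω : (L × M) →ₗ[ℝ] (L × M) →ₗ[ℝ] ℝ, IsSymplecticForm Ω := by
  obtain ⟨ω, α, u, s, hωalt, hωcoc, hαbr, hαu, hωrad⟩ := exists_reduction h1
  obtain ⟨σ, β, v, t, hσalt, hσcoc, hβbr, hβv, hσrad⟩ := exists_reduction h2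
  set lam : ℝ := |s * t| + 1 with hlamdef
  have hlam1 : (1 : ℝ) ≤ lam := by
    rw [hlamdef]; linarith [abs_nonneg (s * t)]
  have hlam0 : lam ≠ 0 := by linarith
  have hlamst : lam ^ 2 + s * t > 0 := by
    have h1' : lam ^ 2 ≥ lam := by nlinarith
    have h2' : lam > |s * t| := by rw [hlamdef]; linarith
    have h3' : -(s * t) ≤ |s * t| := neg_le_abs _
    nlinarith
  set Ω : (L × M) →ₗ[ℝ] (L × M) →ₗ[ℝ] ℝ := LinearMap.mk₂ ℝ
    (fun p q => ω p.1 q.1 + σ p.2 q.2 + lam * (α p.1 * β q.2 - α q.1 * β p.2))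
    (fun p p' q => by
      simp only [Prod.fst_add, Prod.snd_add, map_add, LinearMap.add_apply]; ring)
    (fun c p q => by
      simp only [Prod.smul_fst, Prod.smul_snd, map_smul, LinearMap.smul_apply,
        smul_eq_mul]; ring)
    (fun p q q' => by
      simp only [Prod.fst_add, Prod.snd_add, map_add, LinearMap.add_apply]; ring)
    (fun p q c => by
      simp only [Prod.smul_fst, Prod.smul_snd, map_smul, LinearMap.smul_apply,
        smul_eq_mul]; ring) with hΩdef
  have hΩapp : ∀ p q : L × M,
      Ω p q = ω p.1 q.1 + σ p.2 q.2 + lam * (α p.1 * β q.2 - α q.1 * β p.2) := by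
    intro p q; rw [hΩdef]; rfl
  refine ⟨Ω, ⟨⟨?_, ?_⟩, ?_⟩⟩
  · intro p
    rw [hΩapp, hωalt, hσalt]; ring
  · intro p q r
    have hbr : ∀ a b : L × M, ⁅a, b⁆ = ((⁅a.1, b.1⁆ : L), (⁅a.2, b.2⁆ : M)) :=
      fun a b => rfl
    rw [hΩapp, hΩapp, hΩapp, hbr, hbr, hbr]
    simp only [hαbr, hβbr, zero_mul, mul_zero, sub_zero, zero_sub, mul_neg]
    have hc1 := hωcoc p.1 q.1 r.1
    have hc2 := hσcoc p.2 q.2 r.2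
    ring_nf
    ring_nf at hc1 hc2
    linarith
  · rintro ⟨x, m⟩ hp
    have hA : ∀ y, ω x y = (lam * β m) * α y := by
      intro y
      have h := hp (y, (0 : M))
      rw [hΩapp] at h
      simp only [map_zero] at h
      ring_nf at h ⊢
      linarith
    have hB : ∀ n, σ m n = (-(lam * α x)) * β n := by
      intro n
      have h := hp ((0 : L), n)
      rw [hΩapp] at h
      simp only [map_zero] at h
      ring_nf at h ⊢
      linarith
    obtain ⟨hx1, hc1⟩ := hωrad x (lam * β m) hA
    obtain ⟨hm1, hc2⟩ := hσrad m (-(lam * α x)) hB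
    have hkey : (lam ^ 2 + s * t) * β m = 0 := by linear_combination lam * hc1 - s * hc2
    have hβm : β m = 0 := by
      rcases mul_eq_zero.mp hkey with h | h
      · linarith
      · exact h
    have hαx : α x = 0 := by
      rw [hβm, mul_zero] at hc2
      have : lam * α x = 0 := neg_eq_zero.mp hc2
      rcases mul_eq_zero.mp this with h | h
      · exact absurd h hlam0
      · exact h
    have hx0 : x = 0 := by rw [hαx, zero_smul] at hx1; exact hx1
    have hm0 : m = 0 := by rw [hβm, zero_smul] at hm1; exact hm1
    rw [hx0, hm0]; rfl
end

section
/- Let 𝔤 be a finite-dimensional nilpotent real Lie algebra with dim 𝔤 = 5 or dim 𝔤 = 7. Then the product Lie algebra 𝔤 × ℝ admits a symplectic structure if and only if the product Lie algebra 𝔤 × 𝔤 admits a symplectic structure. -/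
attribute [local instance 100] LieRing.ofAssociativeRing

open Module

section LinearAlgebraHelpers
variable {V : Type*} [AddCommGroup V] [Module ℝ V]

/-- Skew-symmetry from the alternating property. -/
lemma skew_of_alt (β : V →ₗ[ℝ] V →ₗ[ℝ] ℝ) (h : ∀ x, β x x = 0) (x y : V) :
    β x y = - β y x := by
  have h2 := h (x + y)
  simp only [map_add, LinearMap.add_apply, h x, h y] at h2
  linarith

/-- Any alternating bilinear form on an odd-dimensional real vector space has a
nonzero kernel vector. -/
lemma alt_exists_kernel [FiniteDimensional ℝ V] (hodd : Odd (finrank ℝ V))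
    (β : V →ₗ[ℝ] V →ₗ[ℝ] ℝ) (halt : ∀ x, β x x = 0) :
    ∃ ξ : V, ξ ≠ 0 ∧ β ξ = 0 := by
  classical
  set n := finrank ℝ V with hn
  let b := Module.finBasis ℝ V
  set M : Matrix (Fin n) (Fin n) ℝ := Matrix.of (fun i j => β (b i) (b j)) with hM
  have hdet : M.det = 0 := by
    have h1 : M.transpose = -M := by
      ext i j
      simp only [Matrix.transpose_apply, hM, Matrix.of_apply, Matrix.neg_apply]
      rw [skew_of_alt β halt]
    have h2 : M.det = (-1 : ℝ) ^ n * M.det := by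
      conv_lhs => rw [← Matrix.det_transpose, h1]
      simp [Matrix.det_neg]
    rw [hodd.neg_one_pow] at h2
    linarith
  obtain ⟨v, hv0, hv⟩ := Matrix.exists_mulVec_eq_zero_iff.mpr hdet
  have hne : b.equivFun.symm v ≠ 0 := by
    intro h
    exact hv0 ((LinearEquiv.map_eq_zero_iff b.equivFun.symm).mp h)
  refine ⟨b.equivFun.symm v, hne, ?_⟩
  have hright : ∀ i, β (b i) (b.equivFun.symm v) = 0 := by
    intro i
    have := congrFun hv i
    simp only [Matrix.mulVec, dotProduct, hM, Matrix.of_apply, Pi.zero_apply] at this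
    rw [Basis.equivFun_symm_apply, map_sum]
    simpa [mul_comm] using this
  have hflip : (β.flip) (b.equivFun.symm v) = 0 := by
    apply b.ext
    intro i
    simpa using hright i
  ext y
  have : β y (b.equivFun.symm v) = 0 := by
    have := congrArg (fun f => f y) hflip; simpa using this
  rw [skew_of_alt β halt, this, neg_zero]
  simp

/-- The wedge of two linear functionals, as a bilinear form. -/
def wedgeForm (f g : V →ₗ[ℝ] ℝ) : V →ₗ[ℝ] V →ₗ[ℝ] ℝ :=
  LinearMap.mk₂ ℝ (fun x y => f x * g y - g x * f y)
    (fun x x' y => by simp only [map_add]; ring)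
    (fun c x y => by simp only [map_smul, smul_eq_mul]; ring)
    (fun x y y' => by simp only [map_add]; ring)
    (fun c x y => by simp only [map_smul, smul_eq_mul]; ring)

@[simp] lemma wedgeForm_apply (f g : V →ₗ[ℝ] ℝ) (x y : V) :
    wedgeForm f g x y = f x * g y - g x * f y := rfl

/-- On an even-dimensional space there is a nondegenerate alternating form. -/
lemma exists_alt_nondeg_even [FiniteDimensional ℝ V] {m : ℕ}
    (h : finrank ℝ V = m + m) :
    ∃ ν : V →ₗ[ℝ] V →ₗ[ℝ] ℝ, (∀ x, ν x x = 0) ∧ ∀ x, ν x = 0 → x = 0 := by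
  classical
  have hcard : Fintype.card (Fin (finrank ℝ V)) = Fintype.card (Fin m × Bool) := by
    simp [h]; ring
  let b := (Module.finBasis ℝ V).reindex (Fintype.equivOfCardEq hcard)
  refine ⟨∑ i : Fin m, wedgeForm (b.coord (i, true)) (b.coord (i, false)), ?_, ?_⟩
  · intro x
    simp only [LinearMap.sum_apply, wedgeForm_apply]
    simp [mul_comm]
  · intro x hx
    have hc : ∀ j : Fin m × Bool, b.coord j x = 0 := by
      rintro ⟨i, c⟩
      rcases c with _ | _
      · have := congrArg (fun f => f (b (i, true))) hx
        simp only [LinearMap.sum_apply, wedgeForm_apply, LinearMap.zero_apply] at this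
        rw [Finset.sum_eq_single i] at this
        · simpa [Basis.coord_apply, Basis.repr_self, Finsupp.single_apply] using this
        · intro j _ hj
          simp [Basis.coord_apply, Basis.repr_self, Finsupp.single_apply, Prod.ext_iff, hj, Ne.symm hj]
        · simp
      · have := congrArg (fun f => f (b (i, false))) hx
        simp only [LinearMap.sum_apply, wedgeForm_apply, LinearMap.zero_apply] at this
        rw [Finset.sum_eq_single i] at this
        · simpa [Basis.coord_apply, Basis.repr_self, Finsupp.single_apply] using this
        · intro j _ hj
          simp [Basis.coord_apply, Basis.repr_self, Finsupp.single_apply, Prod.ext_iff, hj, Ne.symm hj]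
        · simp
    have := b.sum_repr x
    rw [← this]
    apply Finset.sum_eq_zero
    intro j _
    have := hc j
    rw [Basis.coord_apply] at this
    simp [this]

/-- On an odd-dimensional space there is an alternating form of corank exactly one. -/
lemma exists_alt_corank_one [FiniteDimensional ℝ V] {m : ℕ}
    (h : finrank ℝ V = m + m + 1) :
    ∃ (ν : V →ₗ[ℝ] V →ₗ[ℝ] ℝ) (ξ : V), (∀ x, ν x x = 0) ∧ ξ ≠ 0 ∧ ν ξ = 0 ∧
      ∀ x, ν x = 0 → ∃ c : ℝ, x = c • ξ := by
  classical
  have hcard : Fintype.card (Fin (finrank ℝ V))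
      = Fintype.card (Option (Fin m × Bool)) := by
    simp [h]; ring
  let b := (Module.finBasis ℝ V).reindex (Fintype.equivOfCardEq hcard)
  refine ⟨∑ i : Fin m, wedgeForm (b.coord (some (i, true))) (b.coord (some (i, false))),
    b none, ?_, b.ne_zero none, ?_, ?_⟩
  · intro x
    simp only [LinearMap.sum_apply, wedgeForm_apply]
    simp [mul_comm]
  · ext y
    simp only [LinearMap.sum_apply, wedgeForm_apply, LinearMap.zero_apply]
    apply Finset.sum_eq_zero
    intro j _
    simp [Basis.coord_apply, Basis.repr_self, Finsupp.single_apply]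
  · intro x hx
    have hc : ∀ j : Fin m × Bool, b.coord (some j) x = 0 := by
      rintro ⟨i, c⟩
      rcases c with _ | _
      · have := congrArg (fun f => f (b (some (i, true)))) hx
        simp only [LinearMap.sum_apply, wedgeForm_apply, LinearMap.zero_apply] at this
        rw [Finset.sum_eq_single i] at this
        · simpa [Basis.coord_apply, Basis.repr_self, Finsupp.single_apply] using this
        · intro j _ hj
          simp [Basis.coord_apply, Basis.repr_self, Finsupp.single_apply, Prod.ext_iff,
            hj, Ne.symm hj]
        · simp
      · have := congrArg (fun f => f (b (some (i, false)))) hx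
        simp only [LinearMap.sum_apply, wedgeForm_apply, LinearMap.zero_apply] at this
        rw [Finset.sum_eq_single i] at this
        · simpa [Basis.coord_apply, Basis.repr_self, Finsupp.single_apply] using this
        · intro j _ hj
          simp [Basis.coord_apply, Basis.repr_self, Finsupp.single_apply, Prod.ext_iff,
            hj, Ne.symm hj]
        · simp
    refine ⟨b.repr x none, ?_⟩
    have hsum := b.sum_repr x
    rw [← hsum, Fintype.sum_option]
    rw [Finset.sum_eq_zero]
    · simp
    · intro j _
      have := hc j
      rw [Basis.coord_apply] at this
      simp [this]


end LinearAlgebraHelpers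

open Module

@[simp] lemma prod_bracket {L M : Type*} [LieRing L] [LieRing M] (x y : L × M) :
    ⁅x, y⁆ = (⁅x.1, y.1⁆, ⁅x.2, y.2⁆) := rfl

@[simp] lemma real_bracket (s t : ℝ) : ⁅s, t⁆ = 0 := by
  rw [Ring.lie_def]; ring

section Good
variable (L : Type*) [LieRing L] [LieAlgebra ℝ L]

/-- The key intermediate structure: a corank-one 2-cocycle `β` with kernel vector `ξ`
together with a closed one-form `α` not vanishing on `ξ`. -/
def HasGood : Prop :=
  ∃ (β : L →ₗ[ℝ] L →ₗ[ℝ] ℝ) (α : L →ₗ[ℝ] ℝ) (ξ : L),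
    (∀ x, β x x = 0) ∧
    (∀ x y z : L, β ⁅x, y⁆ z + β ⁅y, z⁆ x + β ⁅z, x⁆ y = 0) ∧
    (∀ x y : L, α ⁅x, y⁆ = 0) ∧
    β ξ = 0 ∧ α ξ ≠ 0 ∧
    (∀ x, β x = 0 → α x = 0 → x = 0)

variable {L}

lemma hasGood_to_prodReal (h : HasGood L) :
    ∃ ω : (L × ℝ) →ₗ[ℝ] (L × ℝ) →ₗ[ℝ] ℝ, IsSymplecticForm ω := by
  obtain ⟨β, α, ξ, halt, hcoc, hcl, hξβ, hξα, hker⟩ := h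
  refine ⟨LinearMap.mk₂ ℝ (fun p q => β p.1 q.1 + p.2 * α q.1 - q.2 * α p.1)
    (fun p p' q => by
      simp only [Prod.fst_add, Prod.snd_add, map_add, LinearMap.add_apply]; ring)
    (fun c p q => by
      simp only [Prod.smul_fst, Prod.smul_snd, map_smul, LinearMap.smul_apply,
        smul_eq_mul]; ring)
    (fun p q q' => by
      simp only [Prod.fst_add, Prod.snd_add, map_add, LinearMap.add_apply]; ring)
    (fun c p q => by
      simp only [Prod.smul_fst, Prod.smul_snd, map_smul, LinearMap.smul_apply,
        smul_eq_mul]; ring), ⟨⟨?_, ?_⟩, ?_⟩⟩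
  · intro x
    simp [halt]
  · intro x y z
    simp only [LinearMap.mk₂_apply, prod_bracket, real_bracket, hcl, zero_mul, mul_zero,
      sub_zero, add_zero]
    have := hcoc x.1 y.1 z.1
    linarith
  · intro p hp
    have h1 : α p.1 = 0 := by
      have := hp (0, 1)
      simp only [LinearMap.mk₂_apply, map_zero, LinearMap.zero_apply, mul_zero, one_mul,
        zero_add, zero_sub, neg_eq_zero] at this
      exact this
    have h2 : p.2 = 0 := by
      have := hp (ξ, 0)
      simp only [LinearMap.mk₂_apply, zero_mul, sub_zero] at this
      rw [skew_of_alt β halt, hξβ] at this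
      simp only [LinearMap.zero_apply, neg_zero, zero_add] at this
      rcases mul_eq_zero.mp this with h | h
      · exact h
      · exact absurd h hξα
    have h3 : β p.1 = 0 := by
      ext y
      have := hp (y, 0)
      simp only [LinearMap.mk₂_apply, zero_mul, sub_zero, h2, h1] at this
      simpa using this
    have := hker p.1 h3 h1
    exact Prod.ext this h2

lemma hasGood_to_prodSelf (h : HasGood L) :
    ∃ Ω : (L × L) →ₗ[ℝ] (L × L) →ₗ[ℝ] ℝ, IsSymplecticForm Ω := by
  obtain ⟨β, α, ξ, halt, hcoc, hcl, hξβ, hξα, hker⟩ := h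
  refine ⟨LinearMap.mk₂ ℝ
    (fun p q => β p.1 q.1 + β p.2 q.2 + (α p.1 * α q.2 - α p.2 * α q.1))
    (fun p p' q => by
      simp only [Prod.fst_add, Prod.snd_add, map_add, LinearMap.add_apply]; ring)
    (fun c p q => by
      simp only [Prod.smul_fst, Prod.smul_snd, map_smul, LinearMap.smul_apply,
        smul_eq_mul]; ring)
    (fun p q q' => by
      simp only [Prod.fst_add, Prod.snd_add, map_add, LinearMap.add_apply]; ring)
    (fun c p q => by
      simp only [Prod.smul_fst, Prod.smul_snd, map_smul, LinearMap.smul_apply,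
        smul_eq_mul]; ring), ⟨⟨?_, ?_⟩, ?_⟩⟩
  · intro x
    simp only [LinearMap.mk₂_apply, halt]
    ring
  · intro x y z
    simp only [LinearMap.mk₂_apply, prod_bracket, hcl, zero_mul, mul_zero, sub_zero,
      add_zero]
    have h1 := hcoc x.1 y.1 z.1
    have h2 := hcoc x.2 y.2 z.2
    linarith
  · intro p hp
    have e1 : ∀ y, β p.1 y - α p.2 * α y = 0 := by
      intro y
      have := hp (y, 0)
      simpa [sub_eq_add_neg] using this
    have e2 : ∀ y, β p.2 y + α p.1 * α y = 0 := by
      intro y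
      have := hp (0, y)
      simpa using this
    have hβpξ : β p.1 ξ = 0 := by
      rw [skew_of_alt β halt, hξβ]; simp
    have hβp2ξ : β p.2 ξ = 0 := by
      rw [skew_of_alt β halt, hξβ]; simp
    have hαp2 : α p.2 = 0 := by
      have := e1 ξ
      rw [hβpξ] at this
      have hmul : α p.2 * α ξ = 0 := by linarith
      rcases mul_eq_zero.mp hmul with h | h
      · exact h
      · exact absurd h hξα
    have hαp1 : α p.1 = 0 := by
      have := e2 ξ
      rw [hβp2ξ] at this
      have hmul : α p.1 * α ξ = 0 := by linarith
      rcases mul_eq_zero.mp hmul with h | h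
      · exact h
      · exact absurd h hξα
    have hβ1 : β p.1 = 0 := by
      ext y; have := e1 y; rw [hαp2] at this; simpa using this
    have hβ2 : β p.2 = 0 := by
      ext y; have := e2 y; rw [hαp1] at this; simpa using this
    exact Prod.ext (hker p.1 hβ1 hαp1) (hker p.2 hβ2 hαp2)

end Good

section Extract
variable {L : Type*} [LieRing L] [LieAlgebra ℝ L] [FiniteDimensional ℝ L]


lemma prodReal_to_hasGood (hodd : Odd (finrank ℝ L))
    (ω : (L × ℝ) →ₗ[ℝ] (L × ℝ) →ₗ[ℝ] ℝ) (h : IsSymplecticForm ω) : HasGood L := by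
  obtain ⟨⟨halt, hcoc⟩, hnd⟩ := h
  let inl : L →ₗ[ℝ] L × ℝ := LinearMap.inl ℝ L ℝ
  let β : L →ₗ[ℝ] L →ₗ[ℝ] ℝ := ω.compl₁₂ inl inl
  have hβ : ∀ x y, β x y = ω (x, 0) (y, 0) := fun x y => rfl
  let α : L →ₗ[ℝ] ℝ := (ω.flip (0, 1)).comp inl
  have hα : ∀ x, α x = ω (x, 0) (0, 1) := fun x => rfl
  have hβalt : ∀ x, β x x = 0 := fun x => halt (x, 0)
  have hbr : ∀ x y : L, ((⁅x, y⁆, 0) : L × ℝ) = ⁅((x, 0) : L × ℝ), ((y, 0) : L × ℝ)⁆ := by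
    intro x y
    rw [prod_bracket]
    simp
  have hβcoc : ∀ x y z : L, β ⁅x, y⁆ z + β ⁅y, z⁆ x + β ⁅z, x⁆ y = 0 := by
    intro x y z
    simp only [hβ, hbr]
    exact hcoc (x, 0) (y, 0) (z, 0)
  have hαcl : ∀ x y : L, α ⁅x, y⁆ = 0 := by
    intro x y
    have := hcoc (x, 0) (y, 0) (0, 1)
    rw [show (⁅((y,0) : L × ℝ), ((0,1) : L × ℝ)⁆ : L × ℝ) = 0 by rw [prod_bracket]; simp,
      show (⁅((0,1) : L × ℝ), ((x,0) : L × ℝ)⁆ : L × ℝ) = 0 by rw [prod_bracket]; simp,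
      ← hbr x y] at this
    simp only [map_zero, LinearMap.zero_apply, add_zero] at this
    rw [hα]
    exact this
  have hkey : ∀ x : L, β x = 0 → α x = 0 → x = 0 := by
    intro x h1 h2
    have : ∀ q : L × ℝ, ω (x, 0) q = 0 := by
      rintro ⟨y, t⟩
      have hq : ((y, t) : L × ℝ) = (y, 0) + t • (0, 1) := by simp
      rw [hq, map_add, map_smul]
      have e1 : ω (x, 0) (y, 0) = 0 := by rw [← hβ]; rw [h1]; rfl
      have e2 : ω (x, 0) (0, 1) = 0 := by rw [← hα]; exact h2
      simp [e1, e2]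
    have := hnd _ this
    exact congrArg Prod.fst this
  obtain ⟨ξ, hξ0, hξβ⟩ := alt_exists_kernel hodd β hβalt
  have hξα : α ξ ≠ 0 := fun hc => hξ0 (hkey ξ hξβ hc)
  exact ⟨β, α, ξ, hβalt, hβcoc, hαcl, hξβ, hξα, hkey⟩

end Extract

section Extract2
variable {L : Type*} [LieRing L] [LieAlgebra ℝ L] [FiniteDimensional ℝ L]



lemma prodSelf_to_hasGood (hodd : Odd (finrank ℝ L))
    (Ω : (L × L) →ₗ[ℝ] (L × L) →ₗ[ℝ] ℝ) (h : IsSymplecticForm Ω) : HasGood L := by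
  classical
  obtain ⟨⟨halt, hcoc⟩, hnd⟩ := h
  let inl : L →ₗ[ℝ] L × L := LinearMap.inl ℝ L L
  let inr : L →ₗ[ℝ] L × L := LinearMap.inr ℝ L L
  let A : L →ₗ[ℝ] L →ₗ[ℝ] ℝ := Ω.compl₁₂ inl inl
  let B : L →ₗ[ℝ] L →ₗ[ℝ] ℝ := Ω.compl₁₂ inl inr
  have hA : ∀ x y : L, A x y = Ω (x, 0) (y, 0) := fun _ _ => rfl
  have hB : ∀ x c : L, B x c = Ω (x, 0) (0, c) := fun _ _ => rfl
  have hAalt : ∀ x, A x x = 0 := fun x => halt _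
  have hbr : ∀ x y : L, ((⁅x, y⁆, 0) : L × L) = ⁅((x, 0) : L × L), ((y, 0) : L × L)⁆ := by
    intro x y
    rw [prod_bracket]
    simp
  have hAcoc : ∀ x y z : L, A ⁅x, y⁆ z + A ⁅y, z⁆ x + A ⁅z, x⁆ y = 0 := by
    intro x y z
    simp only [hA, hbr]
    exact hcoc (x, 0) (y, 0) (z, 0)
  have hB1 : ∀ x y c : L, B ⁅x, y⁆ c = 0 := by
    intro x y c
    have := hcoc (x, 0) (y, 0) (0, c)
    rw [show (⁅((y,0) : L × L), ((0,c) : L × L)⁆ : L × L) = 0 by rw [prod_bracket]; simp,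
      show (⁅((0,c) : L × L), ((x,0) : L × L)⁆ : L × L) = 0 by rw [prod_bracket]; simp,
      ← hbr x y] at this
    simp only [map_zero, LinearMap.zero_apply, add_zero] at this
    rw [hB]
    exact this
  have hB2 : ∀ x y z : L, B x ⁅y, z⁆ = 0 := by
    intro x y z
    have := hcoc (x, 0) (0, y) (0, z)
    rw [show (⁅((x,0) : L × L), ((0,y) : L × L)⁆ : L × L) = 0 by rw [prod_bracket]; simp,
      show (⁅((0,y) : L × L), ((0,z) : L × L)⁆ : L × L) = (0, ⁅y,z⁆) by
        rw [prod_bracket]; simp,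
      show (⁅((0,z) : L × L), ((x,0) : L × L)⁆ : L × L) = 0 by rw [prod_bracket]; simp] at this
    simp only [map_zero, LinearMap.zero_apply, add_zero, zero_add] at this
    rw [hB, skew_of_alt Ω halt, this, neg_zero]
  have hsplit : ∀ x y c : L, Ω (x, 0) (y, c) = A x y + B x c := by
    intro x y c
    have hq : ((y, c) : L × L) = (y, 0) + (0, c) := by simp
    rw [hq, map_add, hA, hB]
  have hker0 : ∀ x : L, A x = 0 → B x = 0 → x = 0 := by
    intro x h1 h2
    have hz : ∀ q : L × L, Ω (x, 0) q = 0 := by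
      rintro ⟨y, c⟩
      rw [hsplit, h1, h2]
      simp
    exact congrArg Prod.fst (hnd _ hz)
  let D : Submodule ℝ L := Submodule.span ℝ {z : L | ∃ a b : L, ⁅a, b⁆ = z}
  have hBD : ∀ x ∈ D, B x = 0 := by
    intro x hx
    have hle : D ≤ LinearMap.ker B := by
      rw [Submodule.span_le]
      rintro z ⟨a, b, rfl⟩
      simp only [SetLike.mem_coe, LinearMap.mem_ker]
      ext c
      exact hB1 a b c
    exact LinearMap.mem_ker.mp (hle hx)
  set K := LinearMap.ker A with hKdef
  obtain ⟨T, hT⟩ := Submodule.exists_isCompl (K ⊔ D)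
  set S := D ⊔ T with hSdef
  have hDS : D ≤ S := le_sup_left
  have hcompl : IsCompl K S := by
    constructor
    · rw [disjoint_iff]
      apply (Submodule.eq_bot_iff _).mpr
      rintro x ⟨hxK, hxS⟩
      rcases Submodule.mem_sup.mp hxS with ⟨d, hd, t, ht, rfl⟩
      have htm : t ∈ (K ⊔ D) ⊓ T := by
        refine ⟨?_, ht⟩
        have : t = (d + t) - d := by abel
        rw [this]
        exact Submodule.sub_mem _ (Submodule.mem_sup_left hxK) (Submodule.mem_sup_right hd)
      have ht0 : t = 0 := by
        have := disjoint_iff.mp hT.disjoint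
        rw [this] at htm
        simpa using htm
      rw [ht0, add_zero] at hxK ⊢
      exact hker0 d (LinearMap.mem_ker.mp hxK) (hBD d hd)
    · rw [codisjoint_iff, ← sup_assoc]
      exact codisjoint_iff.mp hT.codisjoint
  set π : L →ₗ[ℝ] K := Submodule.linearProjOfIsCompl K S hcompl with hπdef
  have hπK : ∀ u : K, π u = u := fun u => Submodule.linearProjOfIsCompl_apply_left hcompl u
  have hπS : ∀ x ∈ S, π x = 0 := fun x hx =>
    Submodule.projectionOnto_apply_of_mem_right hcompl hx
  have hπbr : ∀ x y : L, π ⁅x, y⁆ = 0 := fun x y =>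
    hπS _ (hDS (Submodule.subset_span ⟨x, y, rfl⟩))
  have hAK : ∀ (u : K) (y : L), A y u = 0 := by
    intro u y
    rw [skew_of_alt A hAalt]
    have : A (u : L) = 0 := LinearMap.mem_ker.mp u.2
    rw [this]
    simp
  have key : ∀ (ν : K →ₗ[ℝ] K →ₗ[ℝ] ℝ), ∀ x : L,
      ((A + ν.compl₁₂ π π) x = 0) → ν (π x) = 0 ∧ x ∈ K := by
    intro ν x hx
    have happ : ∀ y : L, A x y + ν (π x) (π y) = 0 := by
      intro y
      have := congrArg (fun f => f y) hx
      simpa using this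
    have h1 : ν (π x) = 0 := by
      ext u
      have := happ u
      rw [hAK u x, hπK u, zero_add] at this
      exact this
    refine ⟨h1, ?_⟩
    have h2 : ∀ y ∈ S, A x y = 0 := by
      intro y hy
      have := happ y
      rw [hπS y hy, map_zero, add_zero] at this
      exact this
    have hAx : A x = 0 := by
      ext y
      have hy : y ∈ K ⊔ S := by rw [codisjoint_iff.mp hcompl.codisjoint]; trivial
      obtain ⟨u, hu, v, hv, rfl⟩ := Submodule.mem_sup.mp hy
      rw [map_add]
      have e1 : A x u = 0 := hAK ⟨u, hu⟩ x
      have e2 : A x v = 0 := h2 v hv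
      simp [e1, e2]
    exact LinearMap.mem_ker.mpr hAx
  have hKodd : Odd (finrank ℝ K) := by
    by_contra hev
    rw [Nat.not_odd_iff_even] at hev
    obtain ⟨m, hm⟩ := hev
    obtain ⟨ν, hνalt, hνnd⟩ := exists_alt_nondeg_even (V := K) hm
    have hβalt : ∀ x : L, (A + ν.compl₁₂ π π) x x = 0 := by
      intro x
      simp [hAalt x, hνalt]
    obtain ⟨ξ, hξ0, hξβ⟩ := alt_exists_kernel hodd _ hβalt
    obtain ⟨hν0, hξK⟩ := key ν ξ hξβ
    have hπξ : π ξ = 0 := hνnd _ hν0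
    have : π ξ = ⟨ξ, hξK⟩ := hπK ⟨ξ, hξK⟩
    rw [this] at hπξ
    exact hξ0 (by simpa using congrArg Subtype.val hπξ)
  obtain ⟨m, hm⟩ := hKodd
  obtain ⟨ν, ξK, hνalt, hξK0, hνξ, hνker⟩ :=
    exists_alt_corank_one (V := K) (by omega : finrank ℝ K = m + m + 1)
  set β : L →ₗ[ℝ] L →ₗ[ℝ] ℝ := A + ν.compl₁₂ π π with hβdef
  have hβalt : ∀ x : L, β x x = 0 := by
    intro x
    simp [hβdef, hAalt x, hνalt]
  have hβcoc : ∀ x y z : L, β ⁅x, y⁆ z + β ⁅y, z⁆ x + β ⁅z, x⁆ y = 0 := by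
    intro x y z
    have e : ∀ a b c : L, β ⁅a, b⁆ c = A ⁅a, b⁆ c := by
      intro a b c
      simp [hβdef, hπbr a b]
    rw [e, e, e]
    exact hAcoc x y z
  have hβξ : β (ξK : L) = 0 := by
    ext y
    have e1 : A (ξK : L) = 0 := LinearMap.mem_ker.mp ξK.2
    simp [hβdef, e1, hπK ξK, hνξ]
  have hβker : ∀ x : L, β x = 0 → ∃ c : ℝ, x = c • (ξK : L) := by
    intro x hx
    obtain ⟨hν0, hxK⟩ := key ν x hx
    obtain ⟨c, hc⟩ := hνker _ hν0
    have hπx : π x = ⟨x, hxK⟩ := hπK ⟨x, hxK⟩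
    rw [hπx] at hc
    exact ⟨c, by simpa using congrArg Subtype.val hc⟩
  have hBξ : ∃ c : L, B (ξK : L) c ≠ 0 := by
    by_contra hcon
    push_neg at hcon
    have hB0 : B (ξK : L) = 0 := LinearMap.ext hcon
    have : (ξK : L) = 0 := hker0 _ (LinearMap.mem_ker.mp ξK.2) hB0
    exact hξK0 (by simpa using this)
  obtain ⟨c, hc⟩ := hBξ
  refine ⟨β, B.flip c, ξK, hβalt, hβcoc, ?_, hβξ, ?_, ?_⟩
  · intro x y
    exact hB1 x y c
  · rw [LinearMap.flip_apply]
    exact hc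
  · intro x hβx hαx
    obtain ⟨c', hc'⟩ := hβker x hβx
    rw [hc'] at hαx ⊢
    rw [LinearMap.flip_apply, LinearMap.map_smul₂, smul_eq_mul] at hαx
    rcases mul_eq_zero.mp hαx with h | h
    · rw [h, zero_smul]
    · exact absurd h hc

end Extract2

/-- For a nilpotent real Lie algebra `L` of dimension 5 or 7, the product `L × ℝ` admits a
symplectic structure if and only if `L × L` does. -/
theorem nilpotent_dim5or7_prod_real_symplectic_iff_square
    {L : Type*} [LieRing L] [LieAlgebra ℝ L] [FiniteDimensional ℝ L]
    [LieRing.IsNilpotent L]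
    (hdim : Module.finrank ℝ L = 5 ∨ Module.finrank ℝ L = 7) :
    (∃ ω : (L × ℝ) →ₗ[ℝ] (L × ℝ) →ₗ[ℝ] ℝ, IsSymplecticForm ω) ↔
      ∃ Ω : (L × L) →ₗ[ℝ] (L × L) →ₗ[ℝ] ℝ, IsSymplecticForm Ω := by
  have hodd : Odd (Module.finrank ℝ L) := by
    rcases hdim with h | h <;> rw [h] <;> decide
  constructor
  · rintro ⟨ω, hω⟩
    exact hasGood_to_prodSelf (prodReal_to_hasGood hodd ω hω)
  · rintro ⟨Ω, hΩ⟩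
    exact hasGood_to_prodReal (prodSelf_to_hasGood hodd Ω hΩ)
end

section
/- Let V be a finite-dimensional real vector space, ω an alternating bilinear form on V, and α : V → ℝ a linear functional. Define the alternating bilinear form Ω on V × ℝ by Ω((x,s),(x',s')) = ω(x,x') + α(x)s' − α(x')s. Then Ω is nondegenerate if and only if the radical {x ∈ V : ω(x,y) = 0 for all y ∈ V} of ω is one-dimensional and α does not vanish identically on it. -/
/-- Let `V` be a finite-dimensional real vector space, `ω` an alternating bilinear form on
`V` and `α` a linear functional. The form `Ω ((x,s), (x',s')) = ω x x' + α x * s' - α x' * s`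
on `V × ℝ` is nondegenerate if and only if the radical `{x | ∀ y, ω x y = 0} = ker ω` of `ω`
is one-dimensional and `α` does not vanish identically on it. -/
theorem extension_nondegenerate_iff_radical_line_and_functional_nonzero
    {V : Type*} [AddCommGroup V] [Module ℝ V] [FiniteDimensional ℝ V]
    (ω : V →ₗ[ℝ] V →ₗ[ℝ] ℝ) (hω : ∀ x, ω x x = 0)
    (α : V →ₗ[ℝ] ℝ)
    (Ω : (V × ℝ) →ₗ[ℝ] (V × ℝ) →ₗ[ℝ] ℝ)
    (hΩ : ∀ (x x' : V) (s s' : ℝ), Ω (x, s) (x', s') = ω x x' + α x * s' - α x' * s) :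
    (∀ u : V × ℝ, (∀ v : V × ℝ, Ω u v = 0) → u = 0) ↔
      (Module.finrank ℝ (LinearMap.ker ω) = 1 ∧ ∃ x ∈ LinearMap.ker ω, α x ≠ 0) := by
  have hskew : ∀ x y, ω x y = -ω y x := by
    intro x y
    have h := hω (x + y)
    simp only [map_add, LinearMap.add_apply, hω] at h
    linarith
  constructor
  · intro hnd
    -- radical elements of Ω are trivial
    have hrad : ∀ (x : V) (s : ℝ), α x = 0 → (∀ y, ω x y = s * α y) → x = 0 ∧ s = 0 := by
      intro x s hα hx
      have h0 : (x, s) = (0 : V × ℝ) := by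
        apply hnd
        rintro ⟨y, t⟩
        rw [hΩ, hx y, hα]; ring
      exact ⟨congrArg Prod.fst h0, congrArg Prod.snd h0⟩
    have hex : ∃ x ∈ LinearMap.ker ω, α x ≠ 0 := by
      by_contra hc
      push_neg at hc
      have hle : LinearMap.range ω ≤ (LinearMap.ker ω).dualAnnihilator := by
        rintro _ ⟨x, rfl⟩
        rw [Submodule.mem_dualAnnihilator]
        intro w hw
        have hw0 : ω w = 0 := LinearMap.mem_ker.mp hw
        rw [hskew x w, hw0]
        simp
      have heq : LinearMap.range ω = (LinearMap.ker ω).dualAnnihilator := by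
        have hfr : Module.finrank ℝ (LinearMap.ker ω).dualAnnihilator ≤
            Module.finrank ℝ (LinearMap.range ω) := by
          have h1 := LinearMap.finrank_range_add_finrank_ker ω
          have h2 : Module.finrank ℝ (V ⧸ LinearMap.ker ω) =
              Module.finrank ℝ (LinearMap.ker ω).dualAnnihilator :=
            (Subspace.quotEquivAnnihilator (LinearMap.ker ω)).finrank_eq
          have h3 := Submodule.finrank_quotient_add_finrank (LinearMap.ker ω)
          omega
        exact Submodule.eq_of_le_of_finrank_le hle hfr
      have hα : α ∈ LinearMap.range ω := by
        rw [heq, Submodule.mem_dualAnnihilator]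
        exact hc
      obtain ⟨x₀, hx₀⟩ := hα
      have hαx₀ : α x₀ = 0 := by rw [← hx₀]; exact hω x₀
      have := hrad x₀ 1 hαx₀ (by intro y; rw [← hx₀]; ring)
      exact one_ne_zero this.2
    obtain ⟨e, he, hαe⟩ := hex
    refine ⟨?_, ⟨e, he, hαe⟩⟩
    have hker : LinearMap.ker ω = Submodule.span ℝ {e} := by
      apply le_antisymm
      · intro x hx
        set c := α x / α e with hc
        have hz : x - c • e = 0 := by
          have hαz : α (x - c • e) = 0 := by
            simp only [map_sub, map_smul, smul_eq_mul, hc]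
            field_simp
            simp
          have hωz : ∀ y, ω (x - c • e) y = 0 * α y := by
            intro y
            have hx0 : ω x = 0 := LinearMap.mem_ker.mp hx
            have he0 : ω e = 0 := LinearMap.mem_ker.mp he
            simp [hx0, he0]
          exact (hrad _ 0 hαz hωz).1
        rw [sub_eq_zero.mp hz]
        exact Submodule.smul_mem _ _ (Submodule.mem_span_singleton_self e)
      · rw [Submodule.span_le, Set.singleton_subset_iff]
        exact he
    rw [hker]
    exact finrank_span_singleton (fun h => hαe (by simp [h]))
  · rintro ⟨h1, e, he, hαe⟩
    rintro ⟨x, s⟩ hu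
    have hαx : α x = 0 := by
      have := hu (0, 1)
      rw [hΩ] at this
      simpa using this
    have hωx : ∀ y, ω x y = s * α y := by
      intro y
      have := hu (y, 0)
      rw [hΩ] at this
      have : ω x y - α y * s = 0 := by simpa using this
      linarith
    have hs : s = 0 := by
      have h := hωx e
      have he0 : ω e = 0 := LinearMap.mem_ker.mp he
      rw [hskew x e, he0] at h
      simp at h
      rcases h with h | h
      · exact h
      · exact absurd h hαe
    have hxker : x ∈ LinearMap.ker ω := by
      rw [LinearMap.mem_ker]
      ext y
      simp [hωx y, hs]
    have hker : Submodule.span ℝ {e} = LinearMap.ker ω := by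
      apply Submodule.eq_of_le_of_finrank_le
      · rw [Submodule.span_le, Set.singleton_subset_iff]; exact he
      · rw [h1, finrank_span_singleton (fun h => hαe (by simp [h]))]
    have : x ∈ Submodule.span ℝ {e} := hker ▸ hxker
    obtain ⟨c, hc⟩ := Submodule.mem_span_singleton.mp this
    have : c * α e = 0 := by
      have := hαx
      rw [← hc, map_smul, smul_eq_mul] at this
      exact this
    have hc0 : c = 0 := by
      rcases mul_eq_zero.mp this with h | h
      · exact h
      · exact absurd h hαe
    have hx0 : x = 0 := by rw [← hc, hc0, zero_smul]
    simp [hx0, hs]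
end

section
/- The product Lie algebra 𝔥₅ × 𝔥₅ of two copies of the 5-dimensional Heisenberg Lie algebra admits no symplectic structure. -/
/-- The product `𝔥₅ × 𝔥₅` of two copies of the 5-dimensional Heisenberg Lie algebra admits
no symplectic structure. -/
theorem heisenberg5_prod_heisenberg5_no_symplectic
    {L M : Type*} [LieRing L] [LieAlgebra ℝ L] [LieRing M] [LieAlgebra ℝ M]
    (bL : Module.Basis (Fin 5) ℝ L) (hbL : IsH5Basis bL)
    (bM : Module.Basis (Fin 5) ℝ M) (hbM : IsH5Basis bM) :
    ¬ ∃ Ω : (L × M) →ₗ[ℝ] (L × M) →ₗ[ℝ] ℝ, IsSymplecticForm Ω := by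
  rintro ⟨Ω, ⟨⟨halt, hcoc⟩, hnd⟩⟩
  set B : Fin 5 → L × M := fun i => (bL i, 0) with hBdef
  have hbr : ∀ i j, (⁅B i, B j⁆ : L × M) = (⁅bL i, bL j⁆, 0) := by
    intro i j
    show (⁅bL i, bL j⁆, (⁅(0 : M), (0 : M)⁆ : M)) = _
    rw [lie_zero]
  have hbr' : ∀ j : Fin 5, ∀ m : M, (⁅B j, ((0 : L), m)⁆ : L × M) = 0 := by
    intro j m
    show (⁅bL j, (0 : L)⁆, (⁅(0 : M), m⁆ : M)) = 0
    rw [lie_zero, zero_lie]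
    rfl
  have h12 : (⁅B 1, B 2⁆ : L × M) = B 0 := by
    rw [hbr, hbL]; norm_num; rfl
  have h34 : (⁅B 3, B 4⁆ : L × M) = B 0 := by
    rw [hbr, hbL]; norm_num; rfl
  have hz : ∀ i j : Fin 5,
      ¬ ((i = 1 ∧ j = 2) ∨ (i = 3 ∧ j = 4)) → ¬ ((i = 2 ∧ j = 1) ∨ (i = 4 ∧ j = 3)) →
      (⁅B i, B j⁆ : L × M) = 0 := by
    intro i j h1 h2
    rw [hbr, hbL, if_neg h1, if_neg h2]
    rfl
  have keyB : ∀ i : Fin 5, Ω (B 0) (B i) = 0 := by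
    intro i
    fin_cases i
    · exact halt (B 0)
    · have h := hcoc (B 3) (B 4) (B 1)
      rw [h34, hz 4 1 (by decide) (by decide), hz 1 3 (by decide) (by decide)] at h
      simpa using h
    · have h := hcoc (B 3) (B 4) (B 2)
      rw [h34, hz 4 2 (by decide) (by decide), hz 2 3 (by decide) (by decide)] at h
      simpa using h
    · have h := hcoc (B 1) (B 2) (B 3)
      rw [h12, hz 2 3 (by decide) (by decide), hz 3 1 (by decide) (by decide)] at h
      simpa using h
    · have h := hcoc (B 1) (B 2) (B 4)
      rw [h12, hz 2 4 (by decide) (by decide), hz 4 1 (by decide) (by decide)] at h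
      simpa using h
  have keyL : ∀ l : L, Ω (B 0) ((l, (0 : M))) = 0 := by
    have h0 : (Ω (B 0)).comp (LinearMap.inl ℝ L M) = 0 := by
      apply Module.Basis.ext bL
      intro i
      simpa using keyB i
    intro l
    have := LinearMap.congr_fun h0 l
    simpa using this
  have keyM : ∀ m : M, Ω (B 0) (((0 : L), m)) = 0 := by
    intro m
    have h := hcoc (B 1) (B 2) ((0 : L), m)
    rw [h12, hbr' 2 m] at h
    have h2 : (⁅((0 : L), m), B 1⁆ : L × M) = 0 := by
      show ((⁅(0 : L), bL 1⁆ : L), (⁅m, (0 : M)⁆ : M)) = 0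
      rw [lie_zero, zero_lie]; rfl
    rw [h2] at h
    simpa using h
  have key : ∀ y : L × M, Ω (B 0) y = 0 := by
    intro y
    have hy : y = ((y.1, (0 : M)) : L × M) + ((0 : L), y.2) := by
      simp [Prod.ext_iff]
    rw [hy, map_add, keyL, keyM, add_zero]
  have hB0 : B 0 = 0 := hnd (B 0) key
  have h0 : bL 0 = 0 := by
    have := congrArg Prod.fst hB0
    simpa using this
  exact bL.ne_zero 0 h0
end
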